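/- Let T ∉ C_{0·}(H) be power bounded and L a Banach limit. Then the reduced minimum modulus γ(A_{T,L}) is positive if and only if the compression T₁ = P₁ T|H₀^⊥ is similar to an isometry, if and only if there exists c > 0 with c‖x‖ ≤ ‖T^n x‖ for all x ∈ H₀^⊥ and all n ∈ ℕ. -/

import Mathlib

open ContinuousLinearMap Filter Topology BoundedContinuousFunction
set_option maxHeartbeats 4000000
set_option synthInstance.maxHeartbeats 2000000

/-- The shift `n ↦ n + 1` as a continuous map on `ℕ`. -/
def natShift : C(ℕ, ℕ) := ⟨fun n => n + 1, continuous_of_discreteTopology⟩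

/-- A Banach limit: a norm-one positive shift-invariant continuous linear functional on
the space of bounded (complex) sequences which extends the ordinary limit functional. -/
structure IsBanachLimit (L : (ℕ →ᵇ ℂ) →L[ℂ] ℂ) : Prop where
  norm_one : ‖L‖ = 1
  lim_eq : ∀ (f : ℕ →ᵇ ℂ) (c : ℂ), Tendsto f atTop (𝓝 c) → L f = c
  pos : ∀ f : ℕ →ᵇ ℂ, (∀ n, 0 ≤ (f n).re ∧ (f n).im = 0) → 0 ≤ (L f).re ∧ (L f).im = 0
  shift_inv : ∀ f : ℕ →ᵇ ℂ, L (f.compContinuous natShift) = L f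

/-- `A` is the `L`-asymptotic limit of `T`: a positive operator whose sesquilinear form is
the `L`-limit of the forms of the self-adjoint iterates `T*^n T^n`. -/
def IsLAsymptoticLimit {H : Type*} [NormedAddCommGroup H] [InnerProductSpace ℂ H]
    [CompleteSpace H] (L : (ℕ →ᵇ ℂ) →L[ℂ] ℂ) (T A : H →L[ℂ] H) : Prop :=
  A.IsPositive ∧ ∀ (x y : H) (f : ℕ →ᵇ ℂ),
    (∀ n : ℕ, f n = (inner ℂ ((adjoint (T ^ n) ∘L T ^ n) x) y : ℂ)) →
      (inner ℂ (A x) y : ℂ) = L f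

section Aux

variable {H : Type*} [NormedAddCommGroup H] [InnerProductSpace ℂ H] [CompleteSpace H]

/-- lower bound for Banach limit of a real sequence -/
theorem ibl_low {L : (ℕ →ᵇ ℂ) →L[ℂ] ℂ} (hL : IsBanachLimit L) (f : ℕ →ᵇ ℂ) (r : ℝ)
    (him : ∀ n, (f n).im = 0) (hlo : ∀ n, r ≤ (f n).re) : r ≤ (L f).re := by
  have hc : L (BoundedContinuousFunction.const ℕ (r : ℂ)) = (r : ℂ) :=
    hL.lim_eq _ _ tendsto_const_nhds
  have hp := hL.pos (f - BoundedContinuousFunction.const ℕ (r : ℂ)) ?_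
  · have := hp.1
    have hsub : L (f - BoundedContinuousFunction.const ℕ (r : ℂ)) = L f - (r : ℂ) := by
      rw [map_sub, hc]
    rw [hsub] at this
    simp only [Complex.sub_re, Complex.ofReal_re] at this
    linarith
  · intro n
    simp only [BoundedContinuousFunction.coe_sub, Pi.sub_apply,
      BoundedContinuousFunction.const_apply, Complex.sub_re, Complex.sub_im,
      Complex.ofReal_re, Complex.ofReal_im]
    exact ⟨by linarith [hlo n], by rw [him n]; ring⟩

theorem ibl_high {L : (ℕ →ᵇ ℂ) →L[ℂ] ℂ} (hL : IsBanachLimit L) (f : ℕ →ᵇ ℂ) (r : ℝ)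
    (him : ∀ n, (f n).im = 0) (hhi : ∀ n, (f n).re ≤ r) : (L f).re ≤ r := by
  have h := ibl_low hL (-f) (-r) (fun n => by simp [him n]) (fun n => by simp [hhi n])
  simp only [map_neg, Complex.neg_re] at h
  linarith


/-- Abstract similarity-to-isometry construction. -/
theorem aux_similar {E : Type*} [NormedAddCommGroup E] [InnerProductSpace ℂ E] [CompleteSpace E]
    (B T₁ : E →L[ℂ] E) (hBpos : B.IsPositive)
    (c : ℝ) (hc : 0 < c) (hBlow : ∀ u : E, c * ‖u‖ ≤ ‖B u‖)
    (hform : ∀ u : E, (inner ℂ (B (T₁ u)) (T₁ u) : ℂ) = inner ℂ (B u) u) :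
    ∃ X X' : E →L[ℂ] E, X ∘L X' = 1 ∧ X' ∘L X = 1 ∧
      ∀ u : E, ‖(X ∘L (T₁ ∘L X')) u‖ = ‖u‖ := by
  have hBsym : ∀ u v : E, (inner ℂ (B u) v : ℂ) = inner ℂ u (B v) :=
    fun u v => hBpos.1 u v
  have hBinj : ∀ u : E, B u = 0 → u = 0 := by
    intro u hu
    have h1 : c * ‖u‖ ≤ 0 := by
      have := hBlow u
      rwa [hu, norm_zero] at this
    have h2 : ‖u‖ ≤ 0 := by nlinarith [norm_nonneg u]
    exact norm_le_zero_iff.1 h2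
  have hcinv : (0:ℝ) ≤ c⁻¹ := (inv_pos.2 hc).le
  have hBbound : ∀ u : E, ‖u‖ ≤ (⟨c⁻¹, hcinv⟩ : NNReal) * ‖B u‖ := by
    intro u
    have h1 : c * ‖u‖ ≤ ‖B u‖ := hBlow u
    have h2 : (((⟨c⁻¹, hcinv⟩ : NNReal)) : ℝ) = c⁻¹ := rfl
    rw [h2, inv_mul_eq_div, le_div_iff₀ hc]
    nlinarith
  have hanti : AntilipschitzWith _ B := B.antilipschitz_of_bound hBbound
  have hRclosed : IsClosed (LinearMap.range (B : E →ₗ[ℂ] E) : Set E) := by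
    have h := hanti.isClosed_range B.uniformContinuous
    have he : (LinearMap.range (B : E →ₗ[ℂ] E) : Set E) = Set.range ⇑B := LinearMap.coe_range _
    rw [he]
    exact h
  haveI : CompleteSpace (LinearMap.range (B : E →ₗ[ℂ] E)) := hRclosed.completeSpace_coe
  have hRtop : LinearMap.range (B : E →ₗ[ℂ] E) = ⊤ := by
    rw [← Submodule.orthogonal_eq_bot_iff, Submodule.eq_bot_iff]
    intro v hv
    have h1 : ∀ u : E, (inner ℂ (B u) v : ℂ) = 0 := by
      intro u
      exact (Submodule.mem_orthogonal _ v).1 hv (B u) (LinearMap.mem_range_self (B : E →ₗ[ℂ] E) u)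
    have h2 : B v = 0 := by
      have h3 : (inner ℂ (B v) (B v) : ℂ) = 0 := by
        have h4 := hBsym (B v) v
        rw [h1 (B v)] at h4
        exact h4.symm
      exact inner_self_eq_zero.1 h3
    exact hBinj v h2
  have hBpos' : (0 : E →L[ℂ] E) ≤ B := (ContinuousLinearMap.nonneg_iff_isPositive B).2 hBpos
  set S₁ : E →L[ℂ] E := CFC.sqrt B with hS₁def
  have hS₁S₁ : S₁ * S₁ = B := CFC.sqrt_mul_sqrt_self B hBpos'
  have hS₁sa : IsSelfAdjoint S₁ :=
    ((ContinuousLinearMap.nonneg_iff_isPositive _).1 (CFC.sqrt_nonneg (a := B))).isSelfAdjoint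
  have hS₁sym : ∀ u v : E, (inner ℂ (S₁ u) v : ℂ) = inner ℂ u (S₁ v) :=
    fun u v => (isSelfAdjoint_iff_isSymmetric.mp hS₁sa) u v
  have hS₁B : ∀ u : E, S₁ (S₁ u) = B u := by
    intro u
    rw [← ContinuousLinearMap.mul_apply, hS₁S₁]
  have hS₁inj : LinearMap.ker (S₁ : E →ₗ[ℂ] E) = ⊥ := by
    rw [LinearMap.ker_eq_bot']
    intro u (hu : S₁ u = 0)
    apply hBinj
    rw [← hS₁B, hu, map_zero]
  have hS₁surj : LinearMap.range (S₁ : E →ₗ[ℂ] E) = ⊤ := by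
    rw [LinearMap.range_eq_top]
    intro w
    obtain ⟨u, hu⟩ := LinearMap.range_eq_top.1 hRtop w
    exact ⟨S₁ u, by change S₁ (S₁ u) = w; rw [hS₁B]; exact hu⟩
  set e : E ≃L[ℂ] E := ContinuousLinearEquiv.ofBijective S₁ hS₁inj hS₁surj with hedef
  have hecoe : ∀ u : E, e u = S₁ u := by
    intro u
    rw [hedef, ContinuousLinearEquiv.coeFn_ofBijective]
  refine ⟨S₁, (e.symm : E →L[ℂ] E), ?_, ?_, ?_⟩
  · ext u
    show S₁ (e.symm u) = u
    rw [← hecoe, e.apply_symm_apply]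
  · ext u
    show e.symm (S₁ u) = u
    rw [← hecoe, e.symm_apply_apply]
  · intro u
    set v : E := e.symm u with hvdef
    have hu : S₁ v = u := by rw [← hecoe, hvdef, e.apply_symm_apply]
    have happ : (S₁ ∘L (T₁ ∘L (e.symm : E →L[ℂ] E))) u = S₁ (T₁ v) := rfl
    have hnormsq : ∀ w : E, ‖S₁ w‖ ^ 2 = (inner ℂ (B w) w : ℂ).re := by
      intro w
      have h1 : (⇑(RCLike.re : ℂ →+ ℝ)) = Complex.re := RCLike.re_eq_complex_re
      have h2 := inner_self_eq_norm_sq (𝕜 := ℂ) (S₁ w)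
      rw [h1] at h2
      rw [← h2]
      have h3 : (inner ℂ (S₁ (S₁ w)) w : ℂ) = inner ℂ (S₁ w) (S₁ w) := hS₁sym (S₁ w) w
      rw [← h3, hS₁B]
    have e1 : ‖S₁ (T₁ v)‖ ^ 2 = ‖S₁ v‖ ^ 2 := by
      rw [hnormsq, hnormsq, hform]
    have e2 : ‖S₁ (T₁ v)‖ = ‖S₁ v‖ :=
      (sq_eq_sq₀ (norm_nonneg _) (norm_nonneg _)).1 e1
    rw [happ, e2, hu]


end Aux

theorem stmt13 {H : Type*} [NormedAddCommGroup H] [InnerProductSpace ℂ H] [CompleteSpace H]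
    (T : H →L[ℂ] H) (hT : ∃ C : ℝ, ∀ n : ℕ, ‖T ^ n‖ ≤ C)
    (L : (ℕ →ᵇ ℂ) →L[ℂ] ℂ) (hL : IsBanachLimit L)
    (A : H →L[ℂ] H) (hA : IsLAsymptoticLimit L T A)
    (hker : (LinearMap.ker (A : H →ₗ[ℂ] H) : Set H) =
      {x : H | Tendsto (fun n : ℕ => ‖(T ^ n) x‖) atTop (𝓝 0)})
    (hC0 : LinearMap.ker (A : H →ₗ[ℂ] H) ≠ ⊤) :
    ((∃ c : ℝ, 0 < c ∧ ∀ x ∈ (LinearMap.ker (A : H →ₗ[ℂ] H))ᗮ, c * ‖x‖ ≤ ‖A x‖) ↔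
      (∃ X X' : (LinearMap.ker (A : H →ₗ[ℂ] H))ᗮ →L[ℂ] (LinearMap.ker (A : H →ₗ[ℂ] H))ᗮ,
        X ∘L X' = 1 ∧ X' ∘L X = 1 ∧
        ∀ u : (LinearMap.ker (A : H →ₗ[ℂ] H))ᗮ,
          ‖(X ∘L (((LinearMap.ker (A : H →ₗ[ℂ] H))ᗮ.orthogonalProjectionOnto ∘L
              (T ∘L (LinearMap.ker (A : H →ₗ[ℂ] H))ᗮ.subtypeL)) ∘L X')) u‖ = ‖u‖)) ∧
    ((∃ c : ℝ, 0 < c ∧ ∀ x ∈ (LinearMap.ker (A : H →ₗ[ℂ] H))ᗮ, c * ‖x‖ ≤ ‖A x‖) ↔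
      (∃ c : ℝ, 0 < c ∧ ∀ x ∈ (LinearMap.ker (A : H →ₗ[ℂ] H))ᗮ, ∀ n : ℕ, c * ‖x‖ ≤ ‖(T ^ n) x‖)) := by
  classical
  obtain ⟨C₀, hC₀⟩ := hT
  set D : ℝ := max C₀ 1 with hDdef
  have hD1 : (1:ℝ) ≤ D := le_max_right _ _
  have hD0 : (0:ℝ) < D := lt_of_lt_of_le one_pos hD1
  have hTn : ∀ (n : ℕ) (x : H), ‖(T ^ n) x‖ ≤ D * ‖x‖ := by
    intro n x
    calc ‖(T ^ n) x‖ ≤ ‖T ^ n‖ * ‖x‖ := (T ^ n).le_opNorm x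
      _ ≤ D * ‖x‖ := by
        apply mul_le_mul_of_nonneg_right _ (norm_nonneg x)
        exact le_trans (hC₀ n) (le_max_left _ _)
  -- the canonical bounded sequence
  have hbnd : ∀ x y : H, ∀ n : ℕ, ‖(inner ℂ ((T ^ n) x) ((T ^ n) y) : ℂ)‖ ≤ (D * ‖x‖) * (D * ‖y‖) := by
    intro x y n
    calc ‖(inner ℂ ((T ^ n) x) ((T ^ n) y) : ℂ)‖ ≤ ‖(T ^ n) x‖ * ‖(T ^ n) y‖ :=
        norm_inner_le_norm _ _
      _ ≤ (D * ‖x‖) * (D * ‖y‖) :=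
        mul_le_mul (hTn n x) (hTn n y) (norm_nonneg _) (by positivity)
  set F : H → H → (ℕ →ᵇ ℂ) := fun x y =>
    BoundedContinuousFunction.ofNormedAddCommGroupDiscrete
      (fun n => (inner ℂ ((T ^ n) x) ((T ^ n) y) : ℂ)) ((D * ‖x‖) * (D * ‖y‖)) (hbnd x y)
    with hFdef
  have hFapp : ∀ x y n, F x y n = (inner ℂ ((T ^ n) x) ((T ^ n) y) : ℂ) := fun _ _ _ => rfl
  have hAF : ∀ x y : H, (inner ℂ (A x) y : ℂ) = L (F x y) := by
    intro x y
    refine hA.2 x y (F x y) (fun n => ?_)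
    rw [hFapp, ContinuousLinearMap.comp_apply, ContinuousLinearMap.adjoint_inner_left]
  have hshiftF : ∀ x y : H, F (T x) (T y) = (F x y).compContinuous natShift := by
    intro x y
    ext n
    show (inner ℂ ((T ^ n) (T x)) ((T ^ n) (T y)) : ℂ)
      = (inner ℂ ((T ^ (n+1)) x) ((T ^ (n+1)) y) : ℂ)
    rw [pow_succ, ContinuousLinearMap.mul_apply, ContinuousLinearMap.mul_apply]
  have hAshift : ∀ x y : H, (inner ℂ (A (T x)) (T y) : ℂ) = (inner ℂ (A x) y : ℂ) := by
    intro x y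
    rw [hAF, hAF, hshiftF, hL.shift_inv]
  have hAiter : ∀ (n : ℕ) (x : H),
      (inner ℂ (A ((T ^ n) x)) ((T ^ n) x) : ℂ) = (inner ℂ (A x) x : ℂ) := by
    intro n
    induction n with
    | zero => intro x; simp
    | succ n ih =>
      intro x
      have h1 : (T ^ (n+1)) x = (T ^ n) (T x) := by
        rw [pow_succ, ContinuousLinearMap.mul_apply]
      rw [h1, ih (T x), hAshift]
  -- quadratic form
  set q : H → ℝ := fun x => (inner ℂ (A x) x : ℂ).re with hqdef
  have hFim : ∀ x n, (F x x n).im = 0 := by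
    intro x n
    rw [hFapp]
    have := inner_self_im (𝕜 := ℂ) ((T ^ n) x)
    rwa [show (RCLike.im : ℂ →+ ℝ) = Complex.imAddGroupHom from rfl] at this
  have hFre : ∀ x n, (F x x n).re = ‖(T ^ n) x‖ ^ 2 := by
    intro x n
    rw [hFapp]
    have := inner_self_eq_norm_sq (𝕜 := ℂ) ((T ^ n) x)
    rwa [show ⇑(RCLike.re : ℂ →+ ℝ) = Complex.re from RCLike.re_eq_complex_re] at this
  have hq_upper : ∀ (x : H) (n : ℕ), q x ≤ (D * ‖(T ^ n) x‖) ^ 2 := by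
    intro x n
    have h1 : q x = q ((T ^ n) x) := by
      rw [hqdef]; simp only []; rw [hAiter n x]
    rw [h1, hqdef]
    simp only []
    rw [hAF]
    refine ibl_high hL _ _ (hFim _) (fun k => ?_)
    rw [hFre]
    have h2 : ‖(T ^ k) ((T ^ n) x)‖ ≤ D * ‖(T ^ n) x‖ := hTn k _
    have h3 : (0:ℝ) ≤ ‖(T ^ k) ((T ^ n) x)‖ := norm_nonneg _
    nlinarith
  have hApos : (0 : H →L[ℂ] H) ≤ A := (ContinuousLinearMap.nonneg_iff_isPositive A).2 hA.1
  set S : H →L[ℂ] H := CFC.sqrt A with hSdef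
  have hSS : S * S = A := CFC.sqrt_mul_sqrt_self A hApos
  have hSsa : IsSelfAdjoint S :=
    ((ContinuousLinearMap.nonneg_iff_isPositive _).1 (CFC.sqrt_nonneg (a := A))).isSelfAdjoint
  have hSsym : ∀ x y : H, (inner ℂ (S x) y : ℂ) = inner ℂ x (S y) :=
    fun x y => (isSelfAdjoint_iff_isSymmetric.mp hSsa) x y
  have hqS : ∀ x : H, q x = ‖S x‖ ^ 2 := by
    intro x
    have h1 : A x = S (S x) := by rw [← hSS]; rfl
    rw [hqdef]
    simp only []
    rw [h1, hSsym (S x) x]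
    have := inner_self_eq_norm_sq (𝕜 := ℂ) (S x)
    rw [show ⇑(RCLike.re : ℂ →+ ℝ) = Complex.re from RCLike.re_eq_complex_re] at this
    exact this
  set Ns : ℝ := max ‖S‖ 1 with hNsdef
  have hNs1 : (1:ℝ) ≤ Ns := le_max_right _ _
  have hNs0 : (0:ℝ) < Ns := lt_of_lt_of_le one_pos hNs1
  have hq_lowA : ∀ x : H, ‖A x‖ ^ 2 ≤ Ns ^ 2 * q x := by
    intro x
    have h1 : A x = S (S x) := by rw [← hSS]; rfl
    have h2 : ‖A x‖ ≤ Ns * ‖S x‖ := by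
      rw [h1]
      calc ‖S (S x)‖ ≤ ‖S‖ * ‖S x‖ := S.le_opNorm _
        _ ≤ Ns * ‖S x‖ := mul_le_mul_of_nonneg_right (le_max_left _ _) (norm_nonneg _)
    rw [hqS]
    nlinarith [norm_nonneg (A x), norm_nonneg (S x)]
  have hq_CS : ∀ x : H, q x ≤ ‖A x‖ * ‖x‖ := by
    intro x
    calc (inner ℂ (A x) x : ℂ).re ≤ ‖(inner ℂ (A x) x : ℂ)‖ := Complex.re_le_norm _
      _ ≤ ‖A x‖ * ‖x‖ := norm_inner_le_norm _ _
  -- (i) ↔ (iii)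
  have EqI_III : (∃ c : ℝ, 0 < c ∧ ∀ x ∈ (LinearMap.ker (A : H →ₗ[ℂ] H))ᗮ, c * ‖x‖ ≤ ‖A x‖) ↔
      (∃ c : ℝ, 0 < c ∧ ∀ x ∈ (LinearMap.ker (A : H →ₗ[ℂ] H))ᗮ, ∀ n : ℕ, c * ‖x‖ ≤ ‖(T ^ n) x‖) := by
    constructor
    · rintro ⟨c, hc, hcb⟩
      refine ⟨c / (Ns * D), by positivity, fun x hx n => ?_⟩
      have h1 : c * ‖x‖ ≤ ‖A x‖ := hcb x hx
      have h2 : ‖A x‖ ^ 2 ≤ Ns ^ 2 * q x := hq_lowA x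
      have h3 : q x ≤ (D * ‖(T ^ n) x‖) ^ 2 := hq_upper x n
      have h4 : (c / (Ns * D) * ‖x‖) ^ 2 ≤ ‖(T ^ n) x‖ ^ 2 := by
        rw [div_mul_eq_mul_div, div_pow, div_le_iff₀ (by positivity)]
        have h5 : (c * ‖x‖)^2 ≤ ‖A x‖^2 := pow_le_pow_left₀ (by positivity) h1 2
        nlinarith [norm_nonneg ((T ^ n) x)]
      have := (pow_le_pow_iff_left₀ (by positivity) (norm_nonneg _) two_ne_zero).1 h4
      exact this
    · rintro ⟨c, hc, hcb⟩
      refine ⟨c ^ 2, by positivity, fun x hx => ?_⟩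
      have h1 : (c * ‖x‖) ^ 2 ≤ q x := by
        rw [hqdef]
        simp only []
        rw [hAF]
        refine ibl_low hL _ _ (hFim _) (fun k => ?_)
        rw [hFre]
        exact pow_le_pow_left₀ (by positivity) (hcb x hx k) 2
      have h2 := hq_CS x
      rcases eq_or_ne x 0 with rfl | hx0
      · simp
      · have hxn : (0:ℝ) < ‖x‖ := norm_pos_iff.2 hx0
        have h3 : c ^ 2 * ‖x‖ * ‖x‖ ≤ ‖A x‖ * ‖x‖ := by
          have h4 : c ^ 2 * ‖x‖ * ‖x‖ = (c * ‖x‖) ^ 2 := by ring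
          rw [h4]; exact le_trans h1 h2
        exact le_of_mul_le_mul_right h3 hxn
  -- geometric setup
  set K : Submodule ℂ H := LinearMap.ker (A : H →ₗ[ℂ] H) with hKdef
  set M : Submodule ℂ H := Kᗮ with hMdef
  have hMperp : Mᗮ = K := Submodule.orthogonal_orthogonal K
  have hKmem : ∀ z : H, z ∈ K → A z = 0 := fun z hz => LinearMap.mem_ker.1 hz
  have hKT : ∀ x ∈ K, T x ∈ K := by
    intro x hx
    have hx' : Tendsto (fun n : ℕ => ‖(T ^ n) x‖) atTop (𝓝 0) := by
      have h : x ∈ (K : Set H) := hx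
      rw [hker] at h; exact h
    have h2 : Tendsto (fun n : ℕ => ‖(T ^ n) (T x)‖) atTop (𝓝 0) := by
      have h3 : (fun n : ℕ => ‖(T ^ n) (T x)‖) = (fun n : ℕ => ‖(T ^ (n+1)) x‖) := by
        funext n; rw [pow_succ, ContinuousLinearMap.mul_apply]
      rw [h3]
      exact hx'.comp (tendsto_add_atTop_nat 1)
    show T x ∈ (K : Set H)
    rw [hker]; exact h2
  have hPmem : ∀ z : H, z - (M.orthogonalProjectionOnto z : H) ∈ K := by
    intro z
    have h := Submodule.sub_starProjection_mem_orthogonal (K := M) z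
    rwa [hMperp] at h
  have hPzero : ∀ z ∈ K, M.orthogonalProjectionOnto z = 0 := by
    intro z hz
    apply Submodule.orthogonalProjectionOnto_apply_of_mem_orthogonal
    rw [hMperp]; exact hz
  set T₁ : M →L[ℂ] M := M.orthogonalProjectionOnto ∘L (T ∘L M.subtypeL) with hT₁def
  have hT₁app : ∀ u : M, T₁ u = M.orthogonalProjectionOnto (T ↑u) := fun _ => rfl
  have hPT : ∀ z : H, M.orthogonalProjectionOnto (T z) = T₁ (M.orthogonalProjectionOnto z) := by
    intro z
    have hdec : T z = T ↑(M.orthogonalProjectionOnto z) + T (z - ↑(M.orthogonalProjectionOnto z)) := by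
      rw [← map_add]; congr 1; abel
    rw [hdec, map_add, hPzero _ (hKT _ (hPmem z)), add_zero, hT₁app]
  have hPTn : ∀ (n : ℕ) (u : M), M.orthogonalProjectionOnto ((T ^ n) ↑u) = (T₁ ^ n) u := by
    intro n
    induction n with
    | zero =>
      intro u
      simp only [pow_zero, ContinuousLinearMap.one_apply]
      exact Submodule.orthogonalProjectionOnto_mem_subspace_eq_self u
    | succ n ih =>
      intro u
      have h1 : (T ^ (n+1)) (↑u : H) = T ((T ^ n) ↑u) := by
        rw [pow_succ', ContinuousLinearMap.mul_apply]
      have h2 : (T₁ ^ (n+1)) u = T₁ ((T₁ ^ n) u) := by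
        rw [pow_succ', ContinuousLinearMap.mul_apply]
      rw [h1, h2, hPT, ih]
  have hMne : M ≠ ⊥ := by
    intro h
    exact hC0 ((Submodule.orthogonal_eq_bot_iff (K := K)).1 h)
  obtain ⟨x₀, hx₀M, hx₀⟩ := (Submodule.ne_bot_iff M).1 hMne
  set u₀ : M := ⟨x₀, hx₀M⟩ with hu₀def
  have hu₀ : u₀ ≠ 0 := by
    intro h
    exact hx₀ (by simpa [hu₀def, Submodule.mk_eq_zero] using h)
  have hPnorm : ∀ z : H, ‖M.orthogonalProjectionOnto z‖ ≤ ‖z‖ := by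
    intro z
    calc ‖M.orthogonalProjectionOnto z‖ ≤ ‖M.orthogonalProjectionOnto‖ * ‖z‖ :=
        (M.orthogonalProjectionOnto).le_opNorm z
      _ ≤ 1 * ‖z‖ := mul_le_mul_of_nonneg_right (Submodule.orthogonalProjectionOnto_norm_le M) (norm_nonneg z)
      _ = ‖z‖ := one_mul _
  have hAsym : ∀ x y : H, (inner ℂ (A x) y : ℂ) = inner ℂ x (A y) :=
    fun x y => hA.1.1 x y
  -- (ii) → (iii)
  have II_to_III :
      (∃ X X' : M →L[ℂ] M, X ∘L X' = 1 ∧ X' ∘L X = 1 ∧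
        ∀ u : M, ‖(X ∘L (T₁ ∘L X')) u‖ = ‖u‖) →
      (∃ c : ℝ, 0 < c ∧ ∀ x ∈ M, ∀ n : ℕ, c * ‖x‖ ≤ ‖(T ^ n) x‖) := by
    rintro ⟨X, X', h1, h2, h3⟩
    set V : M →L[ℂ] M := X ∘L (T₁ ∘L X') with hVdef
    have hXX'u : ∀ u : M, X (X' u) = u := by
      intro u
      have := DFunLike.congr_fun h1 u
      simpa [ContinuousLinearMap.comp_apply] using this
    have hX'Xu : ∀ u : M, X' (X u) = u := by
      intro u
      have := DFunLike.congr_fun h2 u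
      simpa [ContinuousLinearMap.comp_apply] using this
    have hVapp : ∀ u : M, V u = X (T₁ (X' u)) := fun _ => rfl
    have hT₁u : ∀ u : M, T₁ u = X' (V (X u)) := by
      intro u
      rw [hVapp, hX'Xu, hX'Xu]
    have hVn : ∀ (n : ℕ) (u : M), ‖(V ^ n) u‖ = ‖u‖ := by
      intro n
      induction n with
      | zero => intro u; simp
      | succ n ih =>
        intro u
        have h4 : (V ^ (n+1)) u = (V ^ n) (V u) := by
          rw [pow_succ, ContinuousLinearMap.mul_apply]
        rw [h4, ih, h3]
    have hT₁n : ∀ (n : ℕ) (u : M), (T₁ ^ n) u = X' ((V ^ n) (X u)) := by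
      intro n
      induction n with
      | zero => intro u; simp [hX'Xu]
      | succ n ih =>
        intro u
        have h4 : (T₁ ^ (n+1)) u = T₁ ((T₁ ^ n) u) := by
          rw [pow_succ', ContinuousLinearMap.mul_apply]
        have h5 : (V ^ (n+1)) (X u) = V ((V ^ n) (X u)) := by
          rw [pow_succ', ContinuousLinearMap.mul_apply]
        rw [h4, ih, h5, hT₁u (X' ((V ^ n) (X u))), hXX'u]
    have hXpos : 0 < ‖X‖ := by
      rcases (norm_nonneg X).lt_or_eq with h | h
      · exact h
      · exfalso
        apply hu₀
        have h4 : ‖X u₀‖ ≤ 0 := by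
          calc ‖X u₀‖ ≤ ‖X‖ * ‖u₀‖ := X.le_opNorm u₀
            _ = 0 := by rw [← h]; ring
        have h5 : X u₀ = 0 := norm_eq_zero.1 (le_antisymm h4 (norm_nonneg _))
        rw [← hX'Xu u₀, h5, map_zero]
    have hX'pos : 0 < ‖X'‖ := by
      rcases (norm_nonneg X').lt_or_eq with h | h
      · exact h
      · exfalso
        apply hu₀
        have h4 : ‖X' u₀‖ ≤ 0 := by
          calc ‖X' u₀‖ ≤ ‖X'‖ * ‖u₀‖ := X'.le_opNorm u₀
            _ = 0 := by rw [← h]; ring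
        have h5 : X' u₀ = 0 := norm_eq_zero.1 (le_antisymm h4 (norm_nonneg _))
        rw [← hXX'u u₀, h5, map_zero]
    have hlow1 : ∀ u : M, ‖u‖ ≤ ‖X‖ * ‖X' u‖ := by
      intro u
      conv_lhs => rw [← hXX'u u]
      exact X.le_opNorm _
    have hlow2 : ∀ u : M, ‖u‖ ≤ ‖X'‖ * ‖X u‖ := by
      intro u
      conv_lhs => rw [← hX'Xu u]
      exact X'.le_opNorm _
    refine ⟨(‖X‖ * ‖X'‖)⁻¹, by exact inv_pos.2 (mul_pos hXpos hX'pos), fun x hx n => ?_⟩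
    set u : M := ⟨x, hx⟩ with hudef
    have hcoeu : (↑u : H) = x := rfl
    have hnu : ‖u‖ = ‖x‖ := rfl
    have k1 : ‖u‖ ≤ ‖X'‖ * ‖X u‖ := hlow2 u
    have k2 : ‖X u‖ = ‖(V ^ n) (X u)‖ := (hVn n _).symm
    have k3 : ‖(V ^ n) (X u)‖ ≤ ‖X‖ * ‖X' ((V ^ n) (X u))‖ := hlow1 _
    have k4 : X' ((V ^ n) (X u)) = (T₁ ^ n) u := (hT₁n n u).symm
    have k5 : ‖(T₁ ^ n) u‖ ≤ ‖(T ^ n) x‖ := by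
      rw [← hPTn n u, hcoeu]
      exact hPnorm _
    have key : ‖x‖ ≤ (‖X‖ * ‖X'‖) * ‖(T ^ n) x‖ := by
      rw [← hnu]
      calc ‖u‖ ≤ ‖X'‖ * ‖X u‖ := k1
        _ = ‖X'‖ * ‖(V ^ n) (X u)‖ := by rw [k2]
        _ ≤ ‖X'‖ * (‖X‖ * ‖X' ((V ^ n) (X u))‖) := by
            exact mul_le_mul_of_nonneg_left k3 hX'pos.le
        _ = ‖X‖ * ‖X'‖ * ‖(T₁ ^ n) u‖ := by rw [k4]; ring
        _ ≤ ‖X‖ * ‖X'‖ * ‖(T ^ n) x‖ := by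
            exact mul_le_mul_of_nonneg_left k5 (mul_pos hXpos hX'pos).le
    calc (‖X‖ * ‖X'‖)⁻¹ * ‖x‖
        ≤ (‖X‖ * ‖X'‖)⁻¹ * ((‖X‖ * ‖X'‖) * ‖(T ^ n) x‖) := by
          exact mul_le_mul_of_nonneg_left key (inv_pos.2 (mul_pos hXpos hX'pos)).le
      _ = ‖(T ^ n) x‖ := by
          rw [← mul_assoc, inv_mul_cancel₀ (mul_pos hXpos hX'pos).ne']
          ring
  -- (i) → (ii)
  have I_to_II : (∃ c : ℝ, 0 < c ∧ ∀ x ∈ M, c * ‖x‖ ≤ ‖A x‖) →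
      (∃ X X' : M →L[ℂ] M, X ∘L X' = 1 ∧ X' ∘L X = 1 ∧
        ∀ u : M, ‖(X ∘L (T₁ ∘L X')) u‖ = ‖u‖) := by
    rintro ⟨c, hc, hcb⟩
    set A₁ : M →L[ℂ] M := M.orthogonalProjectionOnto ∘L (A ∘L M.subtypeL) with hA₁def
    have hAM : ∀ u : M, A ↑u ∈ M := by
      intro u
      refine (Submodule.mem_orthogonal K (A ↑u)).2 (fun k hk => ?_)
      have h := hAsym k ↑u
      rw [hKmem k hk, inner_zero_left] at h
      exact h.symm
    have hA₁coe : ∀ u : M, (↑(A₁ u) : H) = A ↑u := by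
      intro u
      show (↑(M.orthogonalProjectionOnto (A ↑u)) : H) = A ↑u
      exact Submodule.starProjection_eq_self_iff.2 (hAM u)
    have hA₁norm : ∀ u : M, ‖A₁ u‖ = ‖A ↑u‖ := by
      intro u
      rw [← hA₁coe]
      rfl
    have hA₁inner : ∀ u v : M, (inner ℂ (A₁ u) v : ℂ) = inner ℂ (A (↑u : H)) (↑v : H) := by
      intro u v
      rw [Submodule.coe_inner, hA₁coe]
    have hA₁sym : ∀ u v : M, (inner ℂ (A₁ u) v : ℂ) = inner ℂ u (A₁ v) := by
      intro u v
      rw [hA₁inner, hAsym, Submodule.coe_inner, hA₁coe]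
    have hA₁pos : A₁.IsPositive := by
      constructor
      · intro u v
        exact hA₁sym u v
      · intro u
        show 0 ≤ RCLike.re (inner ℂ (A₁ u) u : ℂ)
        rw [hA₁inner]
        exact hA.1.2 ↑u
    have hBlow : ∀ u : M, c * ‖u‖ ≤ ‖A₁ u‖ := by
      intro u
      rw [hA₁norm]
      exact hcb ↑u u.2
    have hform : ∀ v : M, (inner ℂ (A₁ (T₁ v)) (T₁ v) : ℂ) = inner ℂ (A₁ v) v := by
      intro v
      rw [hA₁inner, hA₁inner]
      have hw : (↑(T₁ v) : H) = T ↑v - (T ↑v - ↑(M.orthogonalProjectionOnto (T ↑v))) := by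
        rw [hT₁app]; abel
      set z : H := T ↑v with hzdef
      set k : H := z - ↑(M.orthogonalProjectionOnto z) with hkdef
      have hkK : k ∈ K := hPmem z
      have hAk : A k = 0 := hKmem k hkK
      rw [hw, map_sub, hAk, sub_zero, inner_sub_right]
      rw [show (inner ℂ (A z) k : ℂ) = 0 by rw [hAsym, hAk, inner_zero_right]]
      rw [sub_zero]
      exact hAshift ↑v ↑v
    exact aux_similar A₁ T₁ hA₁pos c hc hBlow hform
  -- assemble
  refine ⟨⟨fun hi => I_to_II hi, fun hii => EqI_III.2 (II_to_III hii)⟩, EqI_III⟩
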